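/- Let n be a positive integer, x, y ∈ ℝⁿ, and let X, Y be symmetric n×n real matrices. Then X − x xᵀ and Y − y yᵀ are both positive semidefinite if and only if there exists an n×n real matrix Z such that the (2n+1)×(2n+1) block matrix M = [[1, xᵀ, yᵀ], [x, X, Z], [y, Zᵀ, Y]] is positive semidefinite. -/

import Mathlib

open Matrix

/-- The `(2n+1) × (2n+1)` arrow matrix `[[1, xᵀ, yᵀ], [x, X, Z], [y, Zᵀ, Y]]`,
indexed by `Unit ⊕ (Fin n ⊕ Fin n)`. -/
def arrowMat (n : ℕ) (x y : Fin n → ℝ) (X Y Z : Matrix (Fin n) (Fin n) ℝ) :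
    Matrix (Unit ⊕ (Fin n ⊕ Fin n)) (Unit ⊕ (Fin n ⊕ Fin n)) ℝ :=
  fun i j =>
    match i, j with
    | Sum.inl _, Sum.inl _ => 1
    | Sum.inl _, Sum.inr (Sum.inl k) => x k
    | Sum.inl _, Sum.inr (Sum.inr k) => y k
    | Sum.inr (Sum.inl k), Sum.inl _ => x k
    | Sum.inr (Sum.inl k), Sum.inr (Sum.inl l) => X k l
    | Sum.inr (Sum.inl k), Sum.inr (Sum.inr l) => Z k l
    | Sum.inr (Sum.inr k), Sum.inl _ => y k
    | Sum.inr (Sum.inr k), Sum.inr (Sum.inl l) => Z l k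
    | Sum.inr (Sum.inr k), Sum.inr (Sum.inr l) => Y k l

private lemma blockdiag_psd {m p : Type*} [Fintype m] [Fintype p]
    {A : Matrix m m ℝ} {D : Matrix p p ℝ} (hA : A.PosSemidef) (hD : D.PosSemidef) :
    (fromBlocks A 0 0 D).PosSemidef := by
  rw [posSemidef_iff_dotProduct_mulVec]
  constructor
  · rw [IsHermitian, fromBlocks_conjTranspose, hA.1, hD.1]
    simp
  · intro v
    rw [dotProduct_block]
    have h1 : (fromBlocks A 0 0 D *ᵥ v) ∘ Sum.inl = A *ᵥ (v ∘ Sum.inl) := by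
      funext i; simp [fromBlocks_mulVec]
    have h2 : (fromBlocks A 0 0 D *ᵥ v) ∘ Sum.inr = D *ᵥ (v ∘ Sum.inr) := by
      funext i; simp [fromBlocks_mulVec]
    rw [h1, h2]
    exact add_nonneg (hA.dotProduct_mulVec_nonneg (v ∘ Sum.inl)) (hD.dotProduct_mulVec_nonneg (v ∘ Sum.inr))

theorem schur_arrow_iff (n : ℕ) (hn : 0 < n) (x y : Fin n → ℝ)
    (X Y : Matrix (Fin n) (Fin n) ℝ) (hX : X.IsSymm) (hY : Y.IsSymm) :
    ((X - vecMulVec x x).PosSemidef ∧ (Y - vecMulVec y y).PosSemidef) ↔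
      ∃ Z : Matrix (Fin n) (Fin n) ℝ, (arrowMat n x y X Y Z).PosSemidef := by
  set B : Matrix Unit (Fin n ⊕ Fin n) ℝ := of fun _ j => Sum.elim x y j with hB
  have hBc : Bᴴ = of fun i _ => Sum.elim x y i := by
    ext i j; simp [hB, conjTranspose_apply]
  have harr : ∀ Z, arrowMat n x y X Y Z = fromBlocks 1 B Bᴴ (fromBlocks X Z Zᵀ Y) := by
    intro Z
    ext i j
    rcases i with _ | (k | k) <;> rcases j with _ | (l | l) <;>
      simp [arrowMat, fromBlocks, hB, hBc, Matrix.one_apply]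
  have hSchur : ∀ Z : Matrix (Fin n) (Fin n) ℝ,
      fromBlocks X Z Zᵀ Y - Bᴴ * (1 : Matrix Unit Unit ℝ)⁻¹ * B =
        fromBlocks (X - vecMulVec x x) (Z - vecMulVec x y)
          (Zᵀ - vecMulVec y x) (Y - vecMulVec y y) := by
    intro Z
    rw [inv_one, Matrix.mul_one]
    ext i j
    rcases i with k | k <;> rcases j with l | l <;>
      simp [fromBlocks, hB, hBc, mul_apply, vecMulVec_apply]
  have hone : (1 : Matrix Unit Unit ℝ).PosDef := Matrix.PosDef.one
  haveI : Invertible (1 : Matrix Unit Unit ℝ) := invertibleOne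
  constructor
  · rintro ⟨h1, h2⟩
    refine ⟨vecMulVec x y, ?_⟩
    rw [harr, PosDef.fromBlocks₁₁ _ _ hone, hSchur]
    have hzt : (vecMulVec x y)ᵀ - vecMulVec y x = 0 := by
      ext i j; simp [vecMulVec_apply, mul_comm]
    have hz : vecMulVec x y - vecMulVec x y = 0 := sub_self _
    rw [hzt, hz]
    exact blockdiag_psd h1 h2
  · rintro ⟨Z, hM⟩
    rw [harr, PosDef.fromBlocks₁₁ _ _ hone, hSchur] at hM
    have h1 := hM.submatrix Sum.inl
    have h2 := hM.submatrix Sum.inr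
    have e1 : (fromBlocks (X - vecMulVec x x) (Z - vecMulVec x y)
        (Zᵀ - vecMulVec y x) (Y - vecMulVec y y)).submatrix Sum.inl Sum.inl
        = X - vecMulVec x x := rfl
    have e2 : (fromBlocks (X - vecMulVec x x) (Z - vecMulVec x y)
        (Zᵀ - vecMulVec y x) (Y - vecMulVec y y)).submatrix Sum.inr Sum.inr
        = Y - vecMulVec y y := rfl
    rw [e1] at h1; rw [e2] at h2
    exact ⟨h1, h2⟩
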